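/- Let κ have uncountable cofinality, X ⊆ [ω]^ω with X ∪ Fin κ-concentrated on Fin, and φ : X ∪ Fin → ω^ω continuous. Then there is A ⊆ X with |A| < κ such that the image φ[(X ∖ A) ∪ Fin] is guessable, i.e., there exists g ∈ ω^ω with {n : f(n) = g(n)} infinite for every f in the image. -/

import Mathlib

open Set Cardinal

/-- The finite subsets of ω, as a subset of Cantor space `ℕ → Bool`. -/
def FinS : Set (ℕ → Bool) := {x | {n | x n = true}.Finite}

/-- if `X ∪ Fin` is κ-concentrated on `Fin` (κ of uncountable
cofinality) and `φ : X ∪ Fin → ω^ω` is continuous, then for some `A ⊆ X` with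
`|A| < κ` the image `φ[(X ∖ A) ∪ Fin]` is guessable. -/
theorem stmt8 (κ : Cardinal) (hκ : Cardinal.aleph0 < κ.ord.cof)
    (X : Set (ℕ → Bool)) (hX : ∀ x ∈ X, {n | x n = true}.Infinite)
    (hconc : κ ≤ Cardinal.mk ↥(X ∪ FinS) ∧
      ∀ U : Set (ℕ → Bool), IsOpen U → FinS ⊆ U →
        Cardinal.mk ↥((X ∪ FinS) \ U) < κ)
    (φ : (ℕ → Bool) → (ℕ → ℕ)) (hφ : ContinuousOn φ (X ∪ FinS)) :
    ∃ A ⊆ X, Cardinal.mk A < κ ∧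
      ∃ g : ℕ → ℕ, ∀ x ∈ (X \ A) ∪ FinS, {n | φ x n = g n}.Infinite := by
  classical
  -- FinS is countable and nonempty
  have hcount : FinS.Countable := by
    have hsub : FinS ⊆ Set.range (fun F : Finset ℕ => (fun n => decide (n ∈ F))) := by
      intro x hx
      refine ⟨(show {n | x n = true}.Finite from hx).toFinset, ?_⟩
      funext n
      cases h : x n <;> simp [Set.Finite.mem_toFinset, h]
    exact (Set.countable_range _).mono hsub
  have hne : FinS.Nonempty := ⟨fun _ => false, by simp [FinS]⟩
  obtain ⟨s, hs⟩ := hcount.exists_eq_range hne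
  have hsmem : ∀ j, s j ∈ FinS := fun j => hs ▸ Set.mem_range_self j
  -- the guess
  set g : ℕ → ℕ := fun n => φ (s n.unpair.1) n with hg
  -- neighborhoods witnessing continuity
  have key : ∀ j k : ℕ, ∃ V : Set (ℕ → Bool), IsOpen V ∧ s j ∈ V ∧
      ∀ x ∈ V ∩ (X ∪ FinS), φ x (Nat.pair j k) = φ (s j) (Nat.pair j k) := by
    intro j k
    have hmem : s j ∈ X ∪ FinS := Or.inr (hsmem j)
    have hc : ContinuousWithinAt (fun x => φ x (Nat.pair j k)) (X ∪ FinS) (s j) :=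
      ((continuous_apply (Nat.pair j k)).comp_continuousOn hφ) (s j) hmem
    have hopen : {φ (s j) (Nat.pair j k)} ∈ nhds (φ (s j) (Nat.pair j k)) :=
      (isOpen_discrete _).mem_nhds rfl
    have hpre := hc hopen
    rw [Filter.mem_map, mem_nhdsWithin] at hpre
    obtain ⟨V, hVopen, hVmem, hVsub⟩ := hpre
    exact ⟨V, hVopen, hVmem, fun x hx => by simpa using hVsub hx⟩
  choose V hVopen hVmem hVsub using key
  -- open sets covering FinS
  set U : ℕ → Set (ℕ → Bool) := fun k => ⋃ j, V j k with hU
  have hUopen : ∀ k, IsOpen (U k) := fun k => isOpen_iUnion fun j => hVopen j k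
  have hUFin : ∀ k, FinS ⊆ U k := by
    intro k x hx
    obtain ⟨j, hj⟩ : ∃ j, s j = x := by
      have : x ∈ Set.range s := hs ▸ hx
      exact this
    exact Set.mem_iUnion.2 ⟨j, hj ▸ hVmem j k⟩
  set B : ℕ → Set (ℕ → Bool) := fun k => (X ∪ FinS) \ U k with hB
  have hBlt : ∀ k, Cardinal.mk (B k) < κ := fun k => hconc.2 (U k) (hUopen k) (hUFin k)
  refine ⟨X ∩ ⋃ k, B k, Set.inter_subset_left, ?_, g, ?_⟩
  · -- cardinality
    have h1 : Cardinal.mk ↥(X ∩ ⋃ k, B k) ≤ Cardinal.mk ↥(⋃ k, B k) :=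
      Cardinal.mk_le_mk_of_subset Set.inter_subset_right
    have h2 : Cardinal.mk ↥(⋃ k, B k) ≤ Cardinal.mk ℕ * ⨆ k, Cardinal.mk (B k) :=
      Cardinal.mk_iUnion_le B
    have hκinf : Cardinal.aleph0 ≤ κ := le_of_lt (lt_of_lt_of_le hκ (Ordinal.cof_ord_le κ))
    have hsup : (⨆ k, Cardinal.mk (B k)) < κ := by
      refine Ordinal.iSup_lt ?_ hBlt
      simpa using hκ
    have h3 : Cardinal.mk ℕ * (⨆ k, Cardinal.mk (B k)) < κ := by
      refine Cardinal.mul_lt_of_lt hκinf ?_ hsup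
      simpa using lt_of_lt_of_le hκ (Ordinal.cof_ord_le κ)
    exact lt_of_le_of_lt (le_trans h1 h2) h3
  · -- guessing
    intro x hx
    have hxU : ∀ k, x ∈ U k := by
      intro k
      rcases hx with ⟨hxX, hxA⟩ | hxF
      · by_contra hnot
        exact hxA ⟨hxX, Set.mem_iUnion.2 ⟨k, Or.inl hxX, hnot⟩⟩
      · exact hUFin k hxF
    have hxXF : x ∈ X ∪ FinS := by
      rcases hx with ⟨hxX, _⟩ | hxF
      · exact Or.inl hxX
      · exact Or.inr hxF
    have hunb : ∀ k, ∃ n ∈ {n | φ x n = g n}, k < n := by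
      intro k
      obtain ⟨j, hj⟩ := Set.mem_iUnion.1 (hxU (k + 1))
      refine ⟨Nat.pair j (k + 1), ?_, ?_⟩
      · have h1 : φ x (Nat.pair j (k + 1)) = φ (s j) (Nat.pair j (k + 1)) :=
          hVsub j (k + 1) x ⟨hj, hxXF⟩
        have h2 : g (Nat.pair j (k + 1)) = φ (s j) (Nat.pair j (k + 1)) := by
          simp [hg, Nat.unpair_pair]
        simpa [h2] using h1
      · exact lt_of_lt_of_le (Nat.lt_succ_self k) (Nat.right_le_pair j (k + 1))
    exact Set.infinite_of_forall_exists_gt hunb
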